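/- Let $A_t \in \{0,1\}$ be actions selected with $P(A_t = 1 \mid \mathcal{H}_{t-1}) = \pi_t \in (0,1)$ where $\pi_t$ is $\mathcal{H}_{t-1}$-measurable, and suppose $\epsilon_t := Y_t - \theta^*_{A_t}$ satisfies $E[\epsilon_t \mid A_t, \mathcal{H}_{t-1}] = 0$ and $E[\epsilon_t^2 \mid A_t, \mathcal{H}_{t-1}] = \sigma^2$. Then with weights $W_t = 1/\sqrt{\pi_{t,A_t}}$ (where $\pi_{t,1} = \pi_t$, $\pi_{t,0} = 1-\pi_t$), the conditional variance of $Z_t = W_t \mathbf{1}\{A_t = 1\}\epsilon_t$ satisfies $E[Z_t^2 \mid \mathcal{H}_{t-1}] = \sigma^2$ exactly, for every $t$, regardless of $\pi_t$. -/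

import Mathlib

open MeasureTheory

private lemma sup_ofReal_min_mul (c d : ℝ) (hd : 0 ≤ d) :
    ⨆ n : ℕ, ENNReal.ofReal (min c (n : ℝ) * d) = ENNReal.ofReal (c * d) := by
  refine le_antisymm (iSup_le fun n => ?_) (le_iSup_of_le ⌈c⌉₊ ?_)
  · exact ENNReal.ofReal_le_ofReal
      (mul_le_mul_of_nonneg_right (min_le_left _ _) hd)
  · rw [min_eq_left (Nat.le_ceil c)]

private lemma integrable_of_approx {Ω : Type*} {m0 : MeasurableSpace Ω}
    (μ : Measure Ω) (g : Ω → ℝ) (gn : ℕ → Ω → ℝ)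
    (hgm : AEStronglyMeasurable g μ)
    (hg0 : ∀ ω, 0 ≤ g ω)
    (hgn0 : ∀ n ω, 0 ≤ gn n ω)
    (hmono : ∀ ω, Monotone fun n => ENNReal.ofReal (gn n ω))
    (hsup : ∀ ω, ⨆ n, ENNReal.ofReal (gn n ω) = ENNReal.ofReal (g ω))
    (hint : ∀ n, Integrable (gn n) μ)
    (C : ℝ) (hC : ∀ n, ∫ ω, gn n ω ∂μ ≤ C) :
    Integrable g μ := by
  refine ⟨hgm, ?_⟩
  rw [hasFiniteIntegral_iff_norm]
  have h1 : ∀ ω, ENNReal.ofReal ‖g ω‖ = ENNReal.ofReal (g ω) := fun ω => by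
    rw [Real.norm_of_nonneg (hg0 ω)]
  calc ∫⁻ ω, ENNReal.ofReal ‖g ω‖ ∂μ
      = ∫⁻ ω, ⨆ n, ENNReal.ofReal (gn n ω) ∂μ := by simp_rw [h1, hsup]
    _ = ⨆ n, ∫⁻ ω, ENNReal.ofReal (gn n ω) ∂μ :=
        lintegral_iSup' (fun n =>
          (ENNReal.measurable_ofReal.comp_aemeasurable (hint n).aemeasurable))
          (Filter.Eventually.of_forall fun ω n m hnm => hmono ω hnm)
    _ = ⨆ n, ENNReal.ofReal (∫ ω, gn n ω ∂μ) := by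
        refine iSup_congr fun n => ?_
        rw [← ofReal_integral_eq_lintegral_ofReal (hint n)
          (Filter.Eventually.of_forall (hgn0 n))]
    _ ≤ ENNReal.ofReal C := iSup_le fun n => ENNReal.ofReal_le_ofReal (hC n)
    _ < ⊤ := ENNReal.ofReal_lt_top

/-- Variance-stabilizing property of inverse-square-root propensity weights in a
two-armed bandit: with `P(Aₜ = 1 ∣ ℋ_{t-1}) = πₜ ∈ (0,1)` (`πₜ` history
measurable), `E[εₜ ∣ Aₜ, ℋ_{t-1}] = 0`, `E[εₜ² ∣ Aₜ, ℋ_{t-1}] = σ²` where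
`εₜ = Yₜ - θ*_{Aₜ}`, and weights `Wₜ = 1/√(π_{t,Aₜ})`, the weighted score
`Zₜ = Wₜ 𝟙{Aₜ=1} εₜ` satisfies `E[Zₜ² ∣ ℋ_{t-1}] = σ²` exactly. -/
theorem inverse_sqrt_propensity_variance_stabilizing
    {Ω : Type*} {m0 : MeasurableSpace Ω} (μ : Measure Ω) [IsProbabilityMeasure μ]
    (ℱ : Filtration ℕ m0)
    (A : ℕ → Ω → Bool) (hA : ∀ t, Measurable (A t))
    (π : ℕ → Ω → ℝ)
    (hπmeas : ∀ t, StronglyMeasurable[ℱ t] (π t))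
    (hπ : ∀ t ω, 0 < π t ω ∧ π t ω < 1)
    (hAprob : ∀ t, μ[fun ω => if A t ω then (1 : ℝ) else 0 | ℱ t] =ᵐ[μ] π t)
    (𝒢 : ℕ → MeasurableSpace Ω)
    (h𝒢 : ∀ t, 𝒢 t = ℱ t ⊔ MeasurableSpace.comap (A t) ⊤)
    (h𝒢m : ∀ t, 𝒢 t ≤ m0)
    (Y : ℕ → Ω → ℝ) (θtrue : Bool → ℝ) (σ : ℝ)
    (hεint : ∀ t, Integrable (fun ω => (Y t ω - θtrue (A t ω)) ^ 2) μ)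
    (hεmean : ∀ t, μ[fun ω => Y t ω - θtrue (A t ω) | 𝒢 t] =ᵐ[μ] 0)
    (hεvar : ∀ t, μ[fun ω => (Y t ω - θtrue (A t ω)) ^ 2 | 𝒢 t]
      =ᵐ[μ] fun _ => σ ^ 2) :
    ∀ t, μ[fun ω =>
        ((1 / Real.sqrt (if A t ω then π t ω else 1 - π t ω))
          * (if A t ω then (1 : ℝ) else 0)
          * (Y t ω - θtrue (A t ω))) ^ 2 | ℱ t]
      =ᵐ[μ] fun _ => σ ^ 2 := by
  intro t
  set p : Ω → ℝ := π t with hp_def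
  have hp0 : ∀ ω, 0 < p ω := fun ω => (hπ t ω).1
  have hℱ𝒢 : ℱ t ≤ 𝒢 t := by rw [h𝒢 t]; exact le_sup_left
  have hℱm : ℱ t ≤ m0 := ℱ.le t
  -- measurability of A t w.r.t. 𝒢 t
  have hAG : Measurable[𝒢 t] (A t) := by
    rw [h𝒢 t]
    exact Measurable.of_comap_le le_sup_right
  have hAsetG : MeasurableSet[𝒢 t] {ω | A t ω = true} :=
    hAG (measurableSet_singleton true)
  have hAsetm : MeasurableSet {ω | A t ω = true} :=
    hA t (measurableSet_singleton true)
  have hpℱ : StronglyMeasurable[ℱ t] p := hπmeas t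
  have hpm : Measurable p := hpℱ.measurable.mono hℱm le_rfl
  -- basic functions
  set ε2 : Ω → ℝ := fun ω => (Y t ω - θtrue (A t ω)) ^ 2 with hε2_def
  set ind : Ω → ℝ := fun ω => if A t ω then (1 : ℝ) else 0 with hind_def
  set g : Ω → ℝ := fun ω => if A t ω then 1 / p ω else 0 with hg_def
  set gn : ℕ → Ω → ℝ := fun n ω => if A t ω then min (1 / p ω) (n : ℝ) else 0
    with hgn_def
  have hε2nn : ∀ ω, 0 ≤ ε2 ω := fun ω => sq_nonneg _
  have hg0 : ∀ ω, 0 ≤ g ω := by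
    intro ω; by_cases hb : A t ω = true <;>
      simp [hg_def, hb, le_of_lt, (hp0 ω)]
  have hgn0 : ∀ n ω, 0 ≤ gn n ω := by
    intro n ω
    by_cases hb : A t ω = true
    · simp only [hgn_def, hb, if_true]
      exact le_min (one_div_nonneg.mpr (hp0 ω).le) (Nat.cast_nonneg n)
    · simp [hgn_def, hb]
  have hgn_min : ∀ n ω, gn n ω = min (g ω) (n : ℝ) := by
    intro n ω
    by_cases hb : A t ω = true
    · simp [hgn_def, hg_def, hb]
    · simp only [hgn_def, hg_def, hb, Bool.false_eq_true, if_false]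
      exact (min_eq_left (Nat.cast_nonneg n)).symm
  have hgn_mul : ∀ n, gn n = (fun ω => min (1 / p ω) (n : ℝ)) * ind := by
    intro n; funext ω
    by_cases hb : A t ω = true <;> simp [hgn_def, hind_def, hb]
  have hg_mul : g = (fun ω => 1 / p ω) * ind := by
    funext ω; by_cases hb : A t ω = true <;> simp [hg_def, hind_def, hb]
  -- measurability
  have hgG : StronglyMeasurable[𝒢 t] g := by
    refine Measurable.stronglyMeasurable ?_
    exact Measurable.ite hAsetG
      ((measurable_const.div (hpℱ.measurable.mono hℱ𝒢 le_rfl)))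
      measurable_const
  have hgm : Measurable g :=
    Measurable.ite hAsetm (measurable_const.div hpm) measurable_const
  have hgnG : ∀ n, StronglyMeasurable[𝒢 t] (gn n) := by
    intro n
    refine Measurable.stronglyMeasurable ?_
    exact Measurable.ite hAsetG
      (((measurable_const.div (hpℱ.measurable.mono hℱ𝒢 le_rfl))).min
        measurable_const) measurable_const
  have hgnm : ∀ n, Measurable (gn n) := fun n =>
    Measurable.ite hAsetm ((measurable_const.div hpm).min measurable_const)
      measurable_const
  have hindℱ : StronglyMeasurable (fun ω => ind ω) := by
    refine Measurable.stronglyMeasurable ?_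
    exact Measurable.ite hAsetm measurable_const measurable_const
  have hind_int : Integrable ind μ := by
    refine (integrable_const (1 : ℝ)).mono' hindℱ.aestronglyMeasurable ?_
    refine Filter.Eventually.of_forall fun ω => ?_
    by_cases hb : A t ω = true <;> simp [hind_def, hb]
  have hnℱ : ∀ n : ℕ, StronglyMeasurable[ℱ t] (fun ω => min (1 / p ω) (n : ℝ)) :=
    fun n => (Measurable.min (measurable_const.div hpℱ.measurable)
      measurable_const).stronglyMeasurable
  have hn_bd : ∀ (n : ℕ) ω, ‖min (1 / p ω) (n : ℝ)‖ ≤ (n : ℝ) := by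
    intro n ω
    rw [Real.norm_of_nonneg (le_min (one_div_nonneg.mpr (hp0 ω).le)
      (Nat.cast_nonneg n))]
    exact min_le_right _ _
  -- integrability of gn n
  have hgn_int : ∀ n, Integrable (gn n) μ := by
    intro n
    refine (integrable_const (n : ℝ)).mono'
      (hgnm n).stronglyMeasurable.aestronglyMeasurable ?_
    refine Filter.Eventually.of_forall fun ω => ?_
    rw [Real.norm_of_nonneg (hgn0 n ω), hgn_min]
    exact le_trans (min_le_right _ _) le_rfl
  -- ∫ gn n ≤ 1
  have hgn_le_one : ∀ n, ∫ ω, gn n ω ∂μ ≤ 1 := by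
    intro n
    have h1 : μ[gn n | ℱ t] =ᵐ[μ]
        (fun ω => min (1 / p ω) (n : ℝ)) * μ[ind | ℱ t] := by
      rw [hgn_mul]
      exact condExp_mul_of_stronglyMeasurable_left (hnℱ n)
        ((hgn_mul n) ▸ hgn_int n) hind_int
    have h2 : μ[gn n | ℱ t] =ᵐ[μ] fun ω => min (1 / p ω) (n : ℝ) * p ω := by
      refine h1.trans ?_
      exact Filter.EventuallyEq.mul Filter.EventuallyEq.rfl (hAprob t)
    have h3 : ∫ ω, gn n ω ∂μ = ∫ ω, min (1 / p ω) (n : ℝ) * p ω ∂μ := by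
      rw [← integral_condExp hℱm, integral_congr_ae h2]
    rw [h3]
    have hible : Integrable (fun ω => min (1 / p ω) (n : ℝ) * p ω) μ := by
      have hm' : Measurable fun ω => min (1 / p ω) (n : ℝ) * p ω :=
        ((measurable_const.div hpm).min measurable_const).mul hpm
      refine (integrable_const (n : ℝ)).mono' hm'.aestronglyMeasurable ?_
      refine Filter.Eventually.of_forall fun ω => ?_
      rw [Real.norm_of_nonneg (mul_nonneg
        (le_min (one_div_nonneg.mpr (hp0 ω).le) (Nat.cast_nonneg n)) (hp0 ω).le)]
      calc min (1 / p ω) (n : ℝ) * p ω ≤ (n : ℝ) * 1 := by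
            refine mul_le_mul (min_le_right _ _) (hπ t ω).2.le (hp0 ω).le
              (by positivity)
        _ = (n : ℝ) := mul_one _
    calc ∫ ω, min (1 / p ω) (n : ℝ) * p ω ∂μ ≤ ∫ _ω, (1 : ℝ) ∂μ := by
          refine integral_mono hible (integrable_const 1) fun ω => ?_
          calc min (1 / p ω) (n : ℝ) * p ω ≤ 1 / p ω * p ω :=
                mul_le_mul_of_nonneg_right (min_le_left _ _) (hp0 ω).le
            _ = 1 := one_div_mul_cancel (hp0 ω).ne'
      _ = 1 := by simp
  -- Integrable g
  have hg_int : Integrable g μ := by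
    refine integrable_of_approx μ g gn hgm.stronglyMeasurable.aestronglyMeasurable
      hg0 hgn0 ?_ ?_ hgn_int 1 hgn_le_one
    · intro ω n m hnm
      refine ENNReal.ofReal_le_ofReal ?_
      rw [hgn_min, hgn_min]
      exact min_le_min le_rfl (Nat.cast_le.mpr hnm)
    · intro ω
      have := sup_ofReal_min_mul (g ω) 1 zero_le_one
      simpa [hgn_min, mul_one] using this
  -- Integrable (g * ε2)
  have hgε2_meas : AEStronglyMeasurable (g * ε2) μ :=
    hgm.stronglyMeasurable.aestronglyMeasurable.mul (hεint t).1
  have hgnε2_int : ∀ n, Integrable (gn n * ε2) μ := by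
    intro n
    refine Integrable.bdd_mul (hεint t)
      (hgnm n).stronglyMeasurable.aestronglyMeasurable (c := (n : ℝ))
      (Filter.Eventually.of_forall fun ω => ?_)
    rw [Real.norm_of_nonneg (hgn0 n ω), hgn_min]
    exact min_le_right _ _
  have hgnε2_le : ∀ n, ∫ ω, (gn n * ε2) ω ∂μ ≤ σ ^ 2 := by
    intro n
    have h1 : μ[gn n * ε2 | 𝒢 t] =ᵐ[μ] gn n * μ[ε2 | 𝒢 t] :=
      condExp_mul_of_stronglyMeasurable_left (hgnG n) (hgnε2_int n) (hεint t)
    have h2 : μ[gn n * ε2 | 𝒢 t] =ᵐ[μ] fun ω => gn n ω * σ ^ 2 :=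
      h1.trans (Filter.EventuallyEq.mul Filter.EventuallyEq.rfl (hεvar t))
    have h3 : ∫ ω, (gn n * ε2) ω ∂μ = ∫ ω, gn n ω * σ ^ 2 ∂μ := by
      rw [← integral_condExp (h𝒢m t), integral_congr_ae h2]
    rw [h3, integral_mul_const]
    calc (∫ ω, gn n ω ∂μ) * σ ^ 2 ≤ 1 * σ ^ 2 :=
          mul_le_mul_of_nonneg_right (hgn_le_one n) (sq_nonneg σ)
      _ = σ ^ 2 := one_mul _
  have hgε2_int : Integrable (g * ε2) μ := by
    refine integrable_of_approx μ (g * ε2) (fun n => gn n * ε2) hgε2_meas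
      (fun ω => mul_nonneg (hg0 ω) (hε2nn ω)) 
      (fun n ω => mul_nonneg (hgn0 n ω) (hε2nn ω)) ?_ ?_ hgnε2_int
      (σ ^ 2) hgnε2_le
    · intro ω n m hnm
      refine ENNReal.ofReal_le_ofReal ?_
      simp only [Pi.mul_apply]
      rw [hgn_min, hgn_min]
      exact mul_le_mul_of_nonneg_right
        (min_le_min le_rfl (Nat.cast_le.mpr hnm)) (hε2nn ω)
    · intro ω
      have := sup_ofReal_min_mul (g ω) (ε2 ω) (hε2nn ω)
      simpa [hgn_min] using this
  -- the integrand equals g * ε2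
  have hZeq : (fun ω =>
      ((1 / Real.sqrt (if A t ω then π t ω else 1 - π t ω))
        * (if A t ω then (1 : ℝ) else 0)
        * (Y t ω - θtrue (A t ω))) ^ 2) = g * ε2 := by
    funext ω
    by_cases hb : A t ω = true
    · simp only [hb, if_true, Pi.mul_apply, hg_def, hε2_def, mul_one]
      rw [mul_pow, div_pow, one_pow, Real.sq_sqrt (hp0 ω).le]
    · simp only [hb, Bool.false_eq_true, if_false, Pi.mul_apply, hg_def,
        hε2_def, mul_zero, zero_mul, ne_eq]
      simp
  -- conditional expectation given 𝒢 t
  have key1 : μ[g * ε2 | 𝒢 t] =ᵐ[μ] fun ω => g ω * σ ^ 2 :=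
    (condExp_mul_of_stronglyMeasurable_left hgG hgε2_int (hεint t)).trans
      (Filter.EventuallyEq.mul Filter.EventuallyEq.rfl (hεvar t))
  -- conditional expectation of g given ℱ t
  have hgF : μ[g | ℱ t] =ᵐ[μ] fun _ => (1 : ℝ) := by
    have h1 : μ[g | ℱ t] =ᵐ[μ] (fun ω => 1 / p ω) * μ[ind | ℱ t] := by
      rw [hg_mul]
      exact condExp_mul_of_stronglyMeasurable_left
        ((measurable_const.div hpℱ.measurable).stronglyMeasurable)
        (hg_mul ▸ hg_int) hind_int
    refine h1.trans ?_
    refine (Filter.EventuallyEq.mul Filter.EventuallyEq.rfl (hAprob t)).trans ?_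
    refine Filter.Eventually.of_forall fun ω => ?_
    simp only [Pi.mul_apply]
    exact one_div_mul_cancel (hp0 ω).ne'
  -- conditional expectation of g * σ² given ℱ t
  have key2 : μ[fun ω => g ω * σ ^ 2 | ℱ t] =ᵐ[μ] fun _ => σ ^ 2 := by
    have heq : (fun ω => g ω * σ ^ 2) = σ ^ 2 • g := by
      funext ω; simp [mul_comm]
    rw [heq]
    refine (condExp_smul (σ ^ 2) g (ℱ t)).trans ?_
    refine Filter.EventuallyEq.trans (Filter.EventuallyEq.fun_comp hgF
      fun x => σ ^ 2 • x) ?_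
    refine Filter.Eventually.of_forall fun ω => ?_
    simp [smul_eq_mul]
  -- put it together
  calc μ[fun ω =>
        ((1 / Real.sqrt (if A t ω then π t ω else 1 - π t ω))
          * (if A t ω then (1 : ℝ) else 0)
          * (Y t ω - θtrue (A t ω))) ^ 2 | ℱ t]
      = μ[g * ε2 | ℱ t] := by rw [hZeq]
    _ =ᵐ[μ] μ[μ[g * ε2 | 𝒢 t] | ℱ t] := (condExp_condExp_of_le hℱ𝒢 (h𝒢m t)).symm
    _ =ᵐ[μ] μ[fun ω => g ω * σ ^ 2 | ℱ t] := condExp_congr_ae key1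
    _ =ᵐ[μ] fun _ => σ ^ 2 := key2
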